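/- Every centered Kleene algebra A is isomorphic to a DF-twist algebra over ◇(A): the map ι(a) := (a ∧ c, ¬a ∧ c) is an injective homomorphism from A into the full DF-twist algebra over the upper-bounded distributive lattice ◇(A) = {x ∧ c : x ∈ A} (with top c), preserving ∧, ¬, and sending c to (c, c), whose image projects onto ◇(A) in the first coordinate. -/
import Mathlib


/-- A centered Kleene algebra: a distributive lattice with an involutive
De Morgan negation satisfying the Kleene inequality, and a center `c` with `¬c = c`. -/
class CenteredKleeneAlgebra (A : Type*) extends DistribLattice A where
  neg : A → A
  center : A
  neg_neg : ∀ a : A, neg (neg a) = a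
  neg_inf : ∀ a b : A, neg (a ⊓ b) = neg a ⊔ neg b
  kleene : ∀ a b : A, neg a ⊓ a ≤ neg b ⊔ b
  neg_center : neg center = center

open CenteredKleeneAlgebra

lemma ckl_neg_sup {A : Type*} [CenteredKleeneAlgebra A] (a b : A) :
    neg (a ⊔ b) = neg a ⊓ neg b := by
  have := neg_inf (neg a) (neg b)
  rw [CenteredKleeneAlgebra.neg_neg, CenteredKleeneAlgebra.neg_neg] at this
  calc neg (a ⊔ b) = neg (neg (neg a ⊓ neg b)) := by rw [this]
    _ = neg a ⊓ neg b := neg_neg _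

lemma ckl_center_le {A : Type*} [CenteredKleeneAlgebra A] (a : A) :
    center ≤ neg a ⊔ a := by
  have := kleene center a
  rwa [neg_center, inf_idem] at this

/-- DF-twist representation: every centered Kleene algebra `A` is
isomorphic to a DF-twist algebra over `◇(A)` via `ι(a) := (a ⊓ c, ¬a ⊓ c)`:
`ι` lands in the universe of the full DF-twist algebra over the upper-bounded
distributive lattice `◇(A)` (pairs joining to the top `c`), is injective,
preserves `⊓` (computed twist-wise), `¬` (the swap), sends `c` to `(c, c)`,
and its image projects onto `◇(A)` in the first coordinate. -/
theorem df_twist_representation {A : Type*} [CenteredKleeneAlgebra A] :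
    let ι : A → A × A := fun a => (a ⊓ center, neg a ⊓ center)
    (∀ a : A, (ι a).1 ⊔ (ι a).2 = center) ∧
    Function.Injective ι ∧
    (∀ a b : A, ι (a ⊓ b) = ((ι a).1 ⊓ (ι b).1, (ι a).2 ⊔ (ι b).2)) ∧
    (∀ a : A, ι (neg a) = ((ι a).2, (ι a).1)) ∧
    ι center = (center, center) ∧
    Prod.fst '' Set.range ι = Set.range (fun x : A => x ⊓ center) := by
  intro ι
  refine ⟨?_, ?_, ?_, ?_, ?_, ?_⟩
  · intro a
    show a ⊓ center ⊔ neg a ⊓ center = center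
    rw [← inf_sup_right]
    exact inf_eq_right.mpr ((ckl_center_le a).trans (le_of_eq (sup_comm _ _)))
  · intro a b h
    have h1 : a ⊓ center = b ⊓ center := congrArg Prod.fst h
    have h2 : neg a ⊓ center = neg b ⊓ center := congrArg Prod.snd h
    have h3 : a ⊔ center = b ⊔ center := by
      have := congrArg neg h2
      rwa [CenteredKleeneAlgebra.neg_inf, CenteredKleeneAlgebra.neg_inf, CenteredKleeneAlgebra.neg_neg, CenteredKleeneAlgebra.neg_neg, neg_center] at this
    exact eq_of_inf_eq_sup_eq h1 h3
  · intro a b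
    show ((a ⊓ b) ⊓ center, neg (a ⊓ b) ⊓ center)
        = ((a ⊓ center) ⊓ (b ⊓ center), neg a ⊓ center ⊔ neg b ⊓ center)
    refine Prod.ext ?_ ?_
    · simp [inf_assoc, inf_comm, inf_left_comm]
    · show neg (a ⊓ b) ⊓ center = _
      rw [CenteredKleeneAlgebra.neg_inf, inf_sup_right]
  · intro a
    show (neg a ⊓ center, neg (neg a) ⊓ center) = (neg a ⊓ center, a ⊓ center)
    rw [CenteredKleeneAlgebra.neg_neg]
  · show (center ⊓ center, neg center ⊓ center) = (center, center)
    rw [neg_center, inf_idem]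
  · ext x
    constructor
    · rintro ⟨p, ⟨a, rfl⟩, rfl⟩
      exact ⟨a, rfl⟩
    · rintro ⟨a, rfl⟩
      exact ⟨ι a, ⟨a, rfl⟩, rfl⟩
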